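/- (Deterministic induction step for achievability) Suppose Q(t−1) ≤ T·C·μ(t−1) and set s(t) = C·μ(t−1) − Q(t−1)/T ≥ 0. If μ(t) = μ(t−1)·x with x ≥ X_min > 0 and C ≤ X_min/(1 − X_min) (with X_min < 1), then Q(t) = (T·C·μ(t−1) − T·μ(t))⁺ ≤ T·C·μ(t). -/

import Mathlib

/-- Deterministic induction step for achievability: if
`Qprev ≤ T·C·μprev`, `s = C·μprev − Qprev/T ≥ 0`, `μ = μprev·x` with `x ≥ Xmin > 0`,
`Xmin < 1` and `C ≤ Xmin/(1 − Xmin)`, then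
`Qnext = (T·C·μprev − T·μ)⁺ ≤ T·C·μ`. -/
theorem stmt_7 (T C μprev μ x Xmin Qprev s : ℝ)
    (hT : 0 < T) (hC : 0 < C) (hμprev : 0 < μprev)
    (hQprev_nonneg : 0 ≤ Qprev) (hQprev : Qprev ≤ T * C * μprev)
    (hs : s = C * μprev - Qprev / T) (hs_nonneg : 0 ≤ s)
    (hμ : μ = μprev * x)
    (hXmin : 0 < Xmin) (hx : Xmin ≤ x) (hXmin1 : Xmin < 1)
    (hCbound : C ≤ Xmin / (1 - Xmin)) :
    max (Qprev + s * T - μ * T) 0 = max (T * C * μprev - T * μ) 0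
    ∧ max (T * C * μprev - T * μ) 0 ≤ T * C * μ := by
  have hTne : T ≠ 0 := ne_of_gt hT
  constructor
  · congr 1
    rw [hs]
    field_simp [hs]
    ring
  · have hμpos : 0 < μ := by
      rw [hμ]; exact mul_pos hμprev (lt_of_lt_of_le hXmin hx)
    have h1Xmin : 0 < 1 - Xmin := by linarith
    have hCX : C * (1 - Xmin) ≤ Xmin := by
      rw [le_div_iff₀ h1Xmin] at hCbound
      exact hCbound
    -- C ≤ (C+1) Xmin ≤ (C+1) x
    have hkey : C ≤ (C + 1) * x := by
      have : C ≤ (C + 1) * Xmin := by nlinarith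
      nlinarith
    have h2 : T * C * μprev - T * μ ≤ T * C * μ := by
      rw [hμ]
      nlinarith
    have h3 : (0:ℝ) ≤ T * C * μ := by positivity
    exact max_le h2 h3
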